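/- (Change of train tracks.) For every ε > 0 there exists h₀ > 0 such that for every h ∈ (0, h₀) there exist Λ > 0, b > 0, and an arclength-parametrized curve γ : [0, Λ] → ℝ² of class H² with: γ(0) = (0,0), γ(Λ) = (b, h), γ'(0) = γ'(Λ) = (1, 0), the image of γ contained in the horizontal strip ℝ × [0, h], and satisfying the asymptotic bounds |b − 2√h| ≤ ε √h and |∫₀^Λ |γ''(s)|² ds + Λ − 4√h| ≤ ε √h. In other words, one can connect two parallel horizontal lines at distance h by a curve with horizontal tangents at both endpoints, spanning a horizontal interval of length b = 2√h(1 + o(1)) and with elastic energy ∫|k|² ds + length = 4√h(1 + o(1)) as h → 0. -/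

import Mathlib

open Real Set MeasureTheory

noncomputable abbrev E2 := EuclideanSpace ℝ (Fin 2)

noncomputable def vv (a b : ℝ) : E2 := WithLp.toLp 2 ![a, b]

@[simp] lemma vv_apply0 (a b : ℝ) : vv a b 0 = a := rfl
@[simp] lemma vv_apply1 (a b : ℝ) : vv a b 1 = b := rfl

lemma vv_eq {a b c d : ℝ} (h1 : a = c) (h2 : b = d) : vv a b = vv c d := by rw [h1, h2]

lemma norm_vv (a b : ℝ) : ‖vv a b‖ = Real.sqrt (a ^ 2 + b ^ 2) := by
  rw [show vv a b = (EuclideanSpace.equiv (Fin 2) ℝ).symm ![a, b] from rfl]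
  rw [EuclideanSpace.norm_eq]
  simp [Fin.sum_univ_two, Real.norm_eq_abs, sq_abs]

lemma sq_norm_vv (a b : ℝ) : ‖vv a b‖ ^ 2 = a ^ 2 + b ^ 2 := by
  rw [norm_vv, Real.sq_sqrt (by positivity)]

lemma hasDerivAt_vv {f g : ℝ → ℝ} {f' g' : ℝ} {s : ℝ}
    (hf : HasDerivAt f f' s) (hg : HasDerivAt g g' s) :
    HasDerivAt (fun t => vv (f t) (g t)) (vv f' g') s := by
  have : HasDerivAt (fun t => (![f t, g t] : Fin 2 → ℝ)) ![f', g'] s := by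
    rw [hasDerivAt_pi]
    intro i
    fin_cases i <;> simpa
  exact ((PiLp.continuousLinearEquiv 2 ℝ (fun _ : Fin 2 => ℝ)).symm.hasFDerivAt.comp_hasDerivAt
    s this)

lemma continuous_vv {f g : ℝ → ℝ} (hf : Continuous f) (hg : Continuous g) :
    Continuous (fun t => vv (f t) (g t)) := by
  apply Continuous.comp (PiLp.continuousLinearEquiv 2 ℝ (fun _ : Fin 2 => ℝ)).symm.continuous
  exact continuous_pi fun i => by fin_cases i <;> simpa

section arcs
variable {r : ℝ}

lemma deriv_u (s Λ : ℝ) : HasDerivAt (fun s : ℝ => (Λ - s)/r) (-(1/r)) s := by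
  simpa [neg_div] using ((hasDerivAt_const s Λ).sub (hasDerivAt_id s)).div_const r

variable (hr : r ≠ 0)
include hr

lemma hd_b1 (s : ℝ) :
    HasDerivAt (fun s => vv (r * sin (s/r)) (r - r * cos (s/r)))
      (vv (cos (s/r)) (sin (s/r))) s := by
  have hu : HasDerivAt (fun s : ℝ => s/r) (1/r) s := (hasDerivAt_id s).div_const r
  have h1 : HasDerivAt (fun s : ℝ => r * sin (s/r)) (r * (cos (s/r) * (1/r))) s :=
    (HasDerivAt.const_mul r ((Real.hasDerivAt_sin _).comp s hu))
  have h2 : HasDerivAt (fun s : ℝ => r - r * cos (s/r)) (0 - r * (-sin (s/r) * (1/r))) s :=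
    (hasDerivAt_const s r).sub (HasDerivAt.const_mul r ((Real.hasDerivAt_cos _).comp s hu))
  have := hasDerivAt_vv h1 h2
  convert this using 2 <;> field_simp <;> ring

lemma hd_b1' (s : ℝ) :
    HasDerivAt (fun s => vv (cos (s/r)) (sin (s/r)))
      (vv (-sin (s/r)/r) (cos (s/r)/r)) s := by
  have hu : HasDerivAt (fun s : ℝ => s/r) (1/r) s := (hasDerivAt_id s).div_const r
  have h1 : HasDerivAt (fun s : ℝ => cos (s/r)) (-sin (s/r) * (1/r)) s :=
    (Real.hasDerivAt_cos _).comp s hu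
  have h2 : HasDerivAt (fun s : ℝ => sin (s/r)) (cos (s/r) * (1/r)) s :=
    (Real.hasDerivAt_sin _).comp s hu
  have := hasDerivAt_vv h1 h2
  convert this using 2 <;> field_simp

lemma hd_b2 (B H Λ s : ℝ) :
    HasDerivAt (fun s => vv (B - r * sin ((Λ - s)/r)) (H - (r - r * cos ((Λ - s)/r))))
      (vv (cos ((Λ - s)/r)) (sin ((Λ - s)/r))) s := by
  have hu := deriv_u (r := r) s Λ
  have h1 : HasDerivAt (fun s : ℝ => B - r * sin ((Λ - s)/r))
      (0 - r * (cos ((Λ - s)/r) * -(1/r))) s :=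
    (hasDerivAt_const s B).sub (HasDerivAt.const_mul r ((Real.hasDerivAt_sin _).comp s hu))
  have h2 : HasDerivAt (fun s : ℝ => H - (r - r * cos ((Λ - s)/r)))
      (0 - (0 - r * (-sin ((Λ - s)/r) * -(1/r)))) s :=
    (hasDerivAt_const s H).sub
      ((hasDerivAt_const s r).sub (HasDerivAt.const_mul r ((Real.hasDerivAt_cos _).comp s hu)))
  have := hasDerivAt_vv h1 h2
  convert this using 2 <;> field_simp <;> ring

lemma hd_b2' (Λ s : ℝ) :
    HasDerivAt (fun s => vv (cos ((Λ - s)/r)) (sin ((Λ - s)/r)))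
      (vv (sin ((Λ - s)/r)/r) (-cos ((Λ - s)/r)/r)) s := by
  have hu := deriv_u (r := r) s Λ
  have h1 : HasDerivAt (fun s : ℝ => cos ((Λ - s)/r)) (-sin ((Λ - s)/r) * -(1/r)) s :=
    (Real.hasDerivAt_cos _).comp s hu
  have h2 : HasDerivAt (fun s : ℝ => sin ((Λ - s)/r)) (cos ((Λ - s)/r) * -(1/r)) s :=
    (Real.hasDerivAt_sin _).comp s hu
  have := hasDerivAt_vv h1 h2
  convert this using 2 <;> field_simp <;> ring

end arcs


lemma cont_b1 (r : ℝ) : Continuous (fun s => vv (r * sin (s/r)) (r - r * cos (s/r))) :=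
  continuous_vv (continuous_const.mul (Real.continuous_sin.comp (continuous_id.div_const r)))
    (continuous_const.sub (continuous_const.mul (Real.continuous_cos.comp (continuous_id.div_const r))))

lemma cont_b1' (r : ℝ) : Continuous (fun s => vv (cos (s/r)) (sin (s/r))) :=
  continuous_vv (Real.continuous_cos.comp (continuous_id.div_const r))
    (Real.continuous_sin.comp (continuous_id.div_const r))

lemma cont_b1'' (r : ℝ) : Continuous (fun s => vv (-sin (s/r)/r) (cos (s/r)/r)) :=
  continuous_vv (((Real.continuous_sin.comp (continuous_id.div_const r)).neg).div_const r)
    ((Real.continuous_cos.comp (continuous_id.div_const r)).div_const r)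

lemma cont_sub (r Λ : ℝ) : Continuous (fun s : ℝ => (Λ - s)/r) :=
  (continuous_const.sub continuous_id).div_const r

lemma cont_b2' (r Λ : ℝ) : Continuous (fun s => vv (cos ((Λ-s)/r)) (sin ((Λ-s)/r))) :=
  continuous_vv (Real.continuous_cos.comp (cont_sub r Λ))
    (Real.continuous_sin.comp (cont_sub r Λ))

lemma cont_b2'' (r Λ : ℝ) : Continuous (fun s => vv (sin ((Λ-s)/r)/r) (-cos ((Λ-s)/r)/r)) :=
  continuous_vv ((Real.continuous_sin.comp (cont_sub r Λ)).div_const r)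
    (((Real.continuous_cos.comp (cont_sub r Λ)).neg).div_const r)

lemma cont_b2 (r B H Λ : ℝ) :
    Continuous (fun s => vv (B - r * sin ((Λ-s)/r)) (H - (r - r * cos ((Λ-s)/r)))) :=
  continuous_vv (continuous_const.sub (continuous_const.mul (Real.continuous_sin.comp (cont_sub r Λ))))
    (continuous_const.sub (continuous_const.sub (continuous_const.mul (Real.continuous_cos.comp (cont_sub r Λ)))))

noncomputable def tg (r θ : ℝ) : ℝ → E2 := fun s =>
  if s ≤ r*θ then vv (r * sin (s/r)) (r - r * cos (s/r))
  else vv (2*r*sin θ - r * sin ((2*r*θ - s)/r))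
    ((2*r - 2*r*cos θ) - (r - r * cos ((2*r*θ - s)/r)))

noncomputable def tg' (r θ : ℝ) : ℝ → E2 := fun s =>
  if s ≤ r*θ then vv (cos (s/r)) (sin (s/r))
  else vv (cos ((2*r*θ - s)/r)) (sin ((2*r*θ - s)/r))

noncomputable def tg'' (r θ : ℝ) : ℝ → E2 := fun s =>
  if s ≤ r*θ then vv (-sin (s/r)/r) (cos (s/r)/r)
  else vv (sin ((2*r*θ - s)/r)/r) (-cos ((2*r*θ - s)/r)/r)

lemma two_arcs {r θ : ℝ} (hr : 0 < r) (hθ0 : 0 < θ) (hθ1 : θ ≤ 1) :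
    (∀ s ∈ Icc (0:ℝ) (2*r*θ), HasDerivWithinAt (tg r θ) (tg' r θ s) (Icc (0:ℝ) (2*r*θ)) s) ∧
    (∀ s ∈ Icc (0:ℝ) (2*r*θ), tg' r θ s = tg' r θ 0 + ∫ u in (0:ℝ)..s, tg'' r θ u) ∧
    IntervalIntegrable (tg'' r θ) volume 0 (2*r*θ) ∧
    IntervalIntegrable (fun s => ‖tg'' r θ s‖ ^ 2) volume 0 (2*r*θ) ∧
    (∀ s ∈ Icc (0:ℝ) (2*r*θ), ‖tg' r θ s‖ = 1) ∧
    tg r θ 0 = 0 ∧ (tg r θ (2*r*θ)) 0 = 2*r*Real.sin θ ∧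
    (tg r θ (2*r*θ)) 1 = 2*r - 2*r*Real.cos θ ∧
    (tg' r θ 0) 0 = 1 ∧ (tg' r θ 0) 1 = 0 ∧ tg' r θ (2*r*θ) = tg' r θ 0 ∧
    (∀ s ∈ Icc (0:ℝ) (2*r*θ), (tg r θ s) 1 ∈ Icc (0:ℝ) (2*r - 2*r*Real.cos θ)) ∧
    (∫ s in (0:ℝ)..(2*r*θ), ‖tg'' r θ s‖ ^ 2) = 2*θ/r := by
  have hrne : r ≠ 0 := ne_of_gt hr
  set L := r*θ with hLdef
  set Λ := 2*r*θ with hΛdef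
  have hL : 0 < L := by positivity
  have hLΛ : L < Λ := by simp only [hLdef, hΛdef]; nlinarith
  have hΛL : Λ - L = L := by simp only [hLdef, hΛdef]; ring
  have hLr : L / r = θ := by rw [hLdef]; field_simp
  -- eq-on facts
  have e1 : EqOn (tg' r θ) (fun s => vv (cos (s/r)) (sin (s/r))) (Iic L) :=
    fun s hs => if_pos hs
  have e2 : EqOn (tg' r θ) (fun s => vv (cos ((Λ - s)/r)) (sin ((Λ - s)/r))) (Ici L) := by
    intro s hs
    rcases eq_or_lt_of_le (mem_Ici.mp hs) with h | h
    · simp only [tg', ← h, if_pos le_rfl]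
      rw [if_pos hLdef.le]
      apply vv_eq <;> rw [hΛL]
    · exact if_neg (not_le.mpr h)
  have g1 : EqOn (tg r θ) (fun s => vv (r * sin (s/r)) (r - r * cos (s/r))) (Iic L) :=
    fun s hs => if_pos hs
  have g2 : EqOn (tg r θ)
      (fun s => vv (2*r*sin θ - r * sin ((Λ - s)/r))
        ((2*r - 2*r*cos θ) - (r - r * cos ((Λ - s)/r)))) (Ici L) := by
    intro s hs
    rcases eq_or_lt_of_le (mem_Ici.mp hs) with h | h
    · simp only [tg, ← h, if_pos le_rfl]
      rw [if_pos hLdef.le]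
      apply vv_eq <;> (rw [hΛL, hLr]; ring)
    · exact if_neg (not_le.mpr h)
  -- norms
  have n' : ∀ s, ‖tg' r θ s‖ = 1 := by
    intro s
    unfold tg'
    split <;> rw [norm_vv, add_comm, Real.sin_sq_add_cos_sq, Real.sqrt_one]
  have n'' : (fun s => ‖tg'' r θ s‖^2) = fun _ => 1/r^2 := by
    funext s
    unfold tg''
    split <;> rw [sq_norm_vv] <;>
      rw [neg_div, neg_sq, div_pow, div_pow, ← add_div] <;>
      rw [add_comm] <;> first
        | rw [Real.sin_sq_add_cos_sq]
        | (rw [add_comm, Real.sin_sq_add_cos_sq])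
  -- FTC on [0, t] for t ≤ L
  have int1 : ∀ t, 0 ≤ t → t ≤ L → IntervalIntegrable (tg'' r θ) volume 0 t := by
    intro t h0 htL
    apply ContinuousOn.intervalIntegrable
    apply ((cont_b1'' r).continuousOn).congr
    intro u hu
    rw [uIcc_of_le h0] at hu
    exact if_pos (le_trans hu.2 htL)
  have key1 : ∀ t, 0 ≤ t → t ≤ L → ∫ u in (0:ℝ)..t, tg'' r θ u = tg' r θ t - tg' r θ 0 := by
    intro t h0 htL
    apply intervalIntegral.integral_eq_sub_of_hasDeriv_right_of_le h0
    · apply ((cont_b1' r).continuousOn).congr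
      intro u hu
      exact e1 (le_trans hu.2 htL)
    · intro u hu
      have hev : tg' r θ =ᶠ[nhds u] (fun s => vv (cos (s/r)) (sin (s/r))) :=
        Filter.eventually_of_mem (Iio_mem_nhds (lt_of_lt_of_le hu.2 htL))
          (fun v hv => e1 (Iio_subset_Iic_self hv))
      have := ((hd_b1' hrne u).congr_of_eventuallyEq hev)
      have heq : tg'' r θ u = vv (-sin (u/r)/r) (cos (u/r)/r) :=
        if_pos (le_of_lt (lt_of_lt_of_le hu.2 htL))
      rw [heq]
      exact this.hasDerivWithinAt
    · exact int1 t h0 htL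
  -- FTC on [L, t] for L ≤ t
  have int2 : ∀ t, L ≤ t → IntervalIntegrable (tg'' r θ) volume L t := by
    intro t hLt
    rw [intervalIntegrable_iff, uIoc_of_le hLt]
    apply IntegrableOn.congr_fun ((cont_b2'' r Λ).integrableOn_Ioc) _ measurableSet_Ioc
    intro u hu
    exact (if_neg (not_le.mpr hu.1)).symm
  have key2 : ∀ t, L ≤ t → ∫ u in L..t, tg'' r θ u = tg' r θ t - tg' r θ L := by
    intro t hLt
    apply intervalIntegral.integral_eq_sub_of_hasDeriv_right_of_le hLt
    · apply ((cont_b2' r Λ).continuousOn).congr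
      intro u hu
      exact e2 hu.1
    · intro u hu
      have hev : tg' r θ =ᶠ[nhds u] (fun s => vv (cos ((Λ-s)/r)) (sin ((Λ-s)/r))) :=
        Filter.eventually_of_mem (Ioi_mem_nhds hu.1) (fun v hv => e2 (Ioi_subset_Ici_self hv))
      have := ((hd_b2' hrne Λ u).congr_of_eventuallyEq hev)
      have heq : tg'' r θ u = vv (sin ((Λ-u)/r)/r) (-cos ((Λ-u)/r)/r) :=
        if_neg (not_le.mpr hu.1)
      rw [heq]
      exact this.hasDerivWithinAt
    · exact int2 t hLt
  have int3 : IntervalIntegrable (tg'' r θ) volume 0 Λ :=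
    (int1 L hL.le le_rfl).trans (int2 Λ hLΛ.le)
  refine ⟨?_, ?_, int3, ?_, fun s _ => n' s, ?_, ?_, ?_, ?_, ?_, ?_, ?_, ?_⟩
  · -- HasDerivWithinAt tg
    intro s hs
    rcases lt_trichotomy s L with h | h | h
    · have hev : tg r θ =ᶠ[nhds s] (fun u => vv (r * sin (u/r)) (r - r * cos (u/r))) :=
        Filter.eventually_of_mem (Iio_mem_nhds h) (fun v hv => g1 (Iio_subset_Iic_self hv))
      have hd := (hd_b1 hrne s).congr_of_eventuallyEq hev
      rw [show tg' r θ s = vv (cos (s/r)) (sin (s/r)) from e1 (le_of_lt h)]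
      exact hd.hasDerivWithinAt
    · have d1 : HasDerivWithinAt (tg r θ) (tg' r θ s) (Iic L) s := by
        refine ((hd_b1 hrne s).hasDerivWithinAt.congr (fun y hy => g1 hy) (g1 h.le)).congr_deriv ?_
        exact (e1 h.le).symm
      have d2 : HasDerivWithinAt (tg r θ) (tg' r θ s) (Ici L) s := by
        have := (hd_b2 hrne (2*r*sin θ) (2*r - 2*r*cos θ) Λ s).hasDerivWithinAt.congr
          (fun y hy => g2 hy) (g2 h.ge)
        refine this.congr_deriv ?_
        rw [e2 h.ge]
      exact (d1.union d2).mono (by rw [Iic_union_Ici]; exact subset_univ _)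
    · have hev : tg r θ =ᶠ[nhds s]
          (fun u => vv (2*r*sin θ - r * sin ((Λ - u)/r))
            ((2*r - 2*r*cos θ) - (r - r * cos ((Λ - u)/r)))) :=
        Filter.eventually_of_mem (Ioi_mem_nhds h) (fun v hv => g2 (Ioi_subset_Ici_self hv))
      have hd := (hd_b2 hrne (2*r*sin θ) (2*r - 2*r*cos θ) Λ s).congr_of_eventuallyEq hev
      rw [show tg' r θ s = vv (cos ((Λ-s)/r)) (sin ((Λ-s)/r)) from e2 h.le]
      exact hd.hasDerivWithinAt
  · -- integral identity
    intro s hs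
    rcases le_or_gt s L with h | h
    · rw [key1 s hs.1 h]; abel
    · rw [← intervalIntegral.integral_add_adjacent_intervals (int1 L hL.le le_rfl) (int2 s h.le),
        key1 L hL.le le_rfl, key2 s h.le]
      abel
  · rw [n'']; exact intervalIntegrable_const
  · -- tg 0 = 0
    have : tg r θ 0 = vv (r * sin (0/r)) (r - r * cos (0/r)) := if_pos hL.le
    rw [this]
    have : vv (r * sin (0/r)) (r - r * cos (0/r)) = vv 0 0 := by
      apply vv_eq <;> simp
    rw [this]
    ext i
    fin_cases i <;> simp [vv]
  · have : tg r θ Λ = vv (2*r*sin θ - r * sin ((Λ-Λ)/r))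
        ((2*r - 2*r*cos θ) - (r - r * cos ((Λ-Λ)/r))) := if_neg (not_le.mpr hLΛ)
    rw [this]; simp
  · have : tg r θ Λ = vv (2*r*sin θ - r * sin ((Λ-Λ)/r))
        ((2*r - 2*r*cos θ) - (r - r * cos ((Λ-Λ)/r))) := if_neg (not_le.mpr hLΛ)
    rw [this]; simp
  · have : tg' r θ 0 = vv (cos (0/r)) (sin (0/r)) := if_pos hL.le
    rw [this]; simp
  · have : tg' r θ 0 = vv (cos (0/r)) (sin (0/r)) := if_pos hL.le
    rw [this]; simp
  · have h1 : tg' r θ Λ = vv (cos ((Λ-Λ)/r)) (sin ((Λ-Λ)/r)) := if_neg (not_le.mpr hLΛ)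
    have h2 : tg' r θ 0 = vv (cos (0/r)) (sin (0/r)) := if_pos hL.le
    rw [h1, h2]
    exact vv_eq (by norm_num) (by norm_num)
  · -- strip
    intro s hs
    have hθπ : θ ≤ π := le_trans hθ1 (by linarith [Real.pi_gt_three])
    rcases le_or_gt s L with h | h
    · rw [g1 h]
      have hsr : s / r ≤ θ := by
        rw [div_le_iff₀ hr]; rw [hLdef] at h; linarith
      have h1 : cos θ ≤ cos (s/r) :=
        Real.cos_le_cos_of_nonneg_of_le_pi (div_nonneg hs.1 hr.le) hθπ hsr
      have h2 : cos (s/r) ≤ 1 := Real.cos_le_one _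
      have h3 : cos θ ≤ 1 := Real.cos_le_one _
      constructor <;> simp only [vv_apply1] <;> nlinarith
    · rw [g2 h.le]
      have hu0 : 0 ≤ (Λ - s)/r := by
        apply div_nonneg _ hr.le; linarith [hs.2]
      have huθ : (Λ - s)/r ≤ θ := by
        rw [div_le_iff₀ hr]
        have : Λ - s < Λ - L := by linarith
        rw [hΛL] at this
        simp only [hLdef] at this ⊢
        linarith
      have h1 : cos θ ≤ cos ((Λ-s)/r) :=
        Real.cos_le_cos_of_nonneg_of_le_pi hu0 hθπ huθ
      have h2 : cos ((Λ-s)/r) ≤ 1 := Real.cos_le_one _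
      have h3 : cos θ ≤ 1 := Real.cos_le_one _
      constructor <;> simp only [vv_apply1] <;> nlinarith
  · rw [n'', intervalIntegral.integral_const, smul_eq_mul]
    field_simp
    ring

set_option maxHeartbeats 1000000 in
theorem change_of_train_tracks :
    ∀ ε > (0:ℝ), ∃ h₀ > (0:ℝ), ∀ h : ℝ, 0 < h → h < h₀ →
      ∃ (Λ b : ℝ) (γ γ' γ'' : ℝ → EuclideanSpace ℝ (Fin 2)),
        0 < Λ ∧ 0 < b ∧
        (∀ s ∈ Icc (0:ℝ) Λ, HasDerivWithinAt γ (γ' s) (Icc (0:ℝ) Λ) s) ∧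
        (∀ s ∈ Icc (0:ℝ) Λ, γ' s = γ' 0 + ∫ u in (0:ℝ)..s, γ'' u) ∧
        IntervalIntegrable γ'' volume 0 Λ ∧
        IntervalIntegrable (fun s => ‖γ'' s‖ ^ 2) volume 0 Λ ∧
        (∀ s ∈ Icc (0:ℝ) Λ, ‖γ' s‖ = 1) ∧
        γ 0 = 0 ∧ (γ Λ) 0 = b ∧ (γ Λ) 1 = h ∧
        (γ' 0) 0 = 1 ∧ (γ' 0) 1 = 0 ∧ γ' Λ = γ' 0 ∧
        (∀ s ∈ Icc (0:ℝ) Λ, (γ s) 1 ∈ Icc (0:ℝ) h) ∧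
        |b - 2 * Real.sqrt h| ≤ ε * Real.sqrt h ∧
        |(∫ s in (0:ℝ)..Λ, ‖γ'' s‖ ^ 2) + Λ - 4 * Real.sqrt h| ≤ ε * Real.sqrt h := by
  intro ε hε
  refine ⟨min 1 (4*ε/5), by positivity, ?_⟩
  intro h h0 hh
  set x : ℝ := Real.sqrt h / 2 with hxdef
  have hsq : Real.sqrt h ^ 2 = h := Real.sq_sqrt h0.le
  have hsh : Real.sqrt h = 2*x := by rw [hxdef]; ring
  have hx0 : 0 < x := by
    have := Real.sqrt_pos.mpr h0
    rw [hxdef]; positivity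
  have hx1 : x ≤ 1/2 := by
    have h1 : h ≤ 1 := le_of_lt (lt_of_lt_of_le hh (min_le_left _ _))
    have := Real.sqrt_le_one.mpr h1
    rw [hxdef]; linarith
  have hh4 : h = 4*x^2 := by rw [← hsq, hsh]; ring
  have hx2 : x^2 ≤ ε/5 := by
    have h2 : h < 4*ε/5 := lt_of_lt_of_le hh (min_le_right _ _)
    nlinarith
  have hπ : x < π := by linarith [Real.pi_gt_three]
  clear_value x
  clear hxdef
  have hs0' : 0 < Real.sin x := Real.sin_pos_of_pos_of_lt_pi hx0 hπ
  have hsle' : Real.sin x ≤ x := (Real.sin_lt hx0).le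
  have hsge' : x - x^3/4 < Real.sin x := lt_of_le_of_lt (by nlinarith [pow_pos hx0 3]) (Real.sin_gt_sub_cube hx0)
  have hcle' : Real.cos x ≤ 1 := Real.cos_le_one x
  have hcge' : 1 - x^2/2 ≤ Real.cos x := Real.one_sub_sq_div_two_le_cos
  have hsc' : Real.sin x ^ 2 + Real.cos x ^ 2 = 1 := Real.sin_sq_add_cos_sq x
  have hsin2 : Real.sin (2*x) = 2 * Real.sin x * Real.cos x := Real.sin_two_mul x
  have hcos2 : Real.cos (2*x) = 2 * Real.cos x ^ 2 - 1 := Real.cos_two_mul x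
  set s : ℝ := Real.sin x with hsdef
  set c : ℝ := Real.cos x with hcdef
  clear_value s c
  clear hsdef hcdef
  rename' hs0' => hs0, hsle' => hsle, hsge' => hsge, hcle' => hcle, hcge' => hcge, hsc' => hsc
  have hsge2 : x/2 ≤ s := by nlinarith
  obtain ⟨r, hrdef, hr⟩ : ∃ r : ℝ, r = x^2/s^2 ∧ 0 < r := ⟨_, rfl, by positivity⟩
  -- scalar inequalities
  have h4x2 : (0:ℝ) ≤ 4*x^2 := by positivity
  have h4x : (0:ℝ) ≤ 4*x := by positivity
  have A1 : 4*x^2*c ≤ 4*x^2 := by linarith [mul_le_mul_of_nonneg_left hcle h4x2]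
  have A2 : 4*x*(x - x^3/4) ≤ 4*x*s := mul_le_mul_of_nonneg_left hsge.le h4x
  have A3 : x^4 ≤ ε*x^2/5 := by nlinarith [mul_le_mul_of_nonneg_left hx2 (sq_nonneg x)]
  have A4 : ε*x^2 ≤ ε*(2*x)*s := by nlinarith [mul_nonneg (mul_nonneg hε.le hx0.le) (sub_nonneg.mpr hsge2)]
  have B1 : 4*x*s ≤ 4*x*x := mul_le_mul_of_nonneg_left hsle h4x
  have B2 : 4*x^2*(1 - x^2/2) ≤ 4*x^2*c := mul_le_mul_of_nonneg_left hcge h4x2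
  have hnn : (0:ℝ) ≤ x - x^3/4 := by nlinarith
  have C0 : 0 ≤ x^2 - s^2 := by nlinarith [mul_nonneg (sub_nonneg.mpr hsle) (by positivity : (0:ℝ) ≤ x + s)]
  have C1 : x^2 - s^2 ≤ x^4/2 := by nlinarith [mul_le_mul hsge.le hsge.le hnn hs0.le]
  have C2 : (x^2-s^2)^2 ≤ x^8/4 := by nlinarith [mul_le_mul C1 C1 C0 (by positivity : (0:ℝ) ≤ x^4/2)]
  have hx4 : x^4 ≤ x^2 := by nlinarith [sq_nonneg x]
  have C5 : x^8 ≤ ε*x^4/2 := by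
    nlinarith [mul_le_mul_of_nonneg_left hx4 (pow_nonneg hx0.le 4),
      mul_le_mul_of_nonneg_left hx2 (pow_nonneg hx0.le 4), hε.le]
  have C3 : x^2/4 ≤ s^2 := by nlinarith
  have C6 : ε*x^4/2 ≤ ε*(2*x)*(x*s^2) := by
    nlinarith [mul_le_mul_of_nonneg_left C3 (by positivity : (0:ℝ) ≤ 2*ε*x^2)]
  -- the two main estimates
  have hb : 2*r*Real.sin (2*x) = 4*x^2*c/s := by
    rw [hsin2, hrdef]; field_simp; ring
  have ineq1 : |2*r*Real.sin (2*x) - 2 * Real.sqrt h| ≤ ε * Real.sqrt h := by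
    rw [hsh, hb]
    have e : 4*x^2*c/s - 2*(2*x) = (4*x^2*c - 4*x*s)/s := by field_simp; ring
    rw [e, abs_div, abs_of_pos hs0, div_le_iff₀ hs0, abs_le]
    constructor <;> linarith
  have ineq2 : |2*(2*x)/r + 2*r*(2*x) - 4 * Real.sqrt h| ≤ ε * Real.sqrt h := by
    rw [hsh]
    have hA : 2*(2*x)/r = 4*s^2/x := by rw [hrdef]; field_simp; ring
    have hB : 2*r*(2*x) = 4*x^3/s^2 := by rw [hrdef]; field_simp; ring
    rw [hA, hB]
    have e2 : 4*s^2/x + 4*x^3/s^2 - 4*(2*x) = 4*(x^2-s^2)^2/(x*s^2) := by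
      field_simp; ring
    rw [e2, abs_of_nonneg (by positivity), div_le_iff₀ (by positivity : (0:ℝ) < x*s^2)]
    linarith
  -- the geometry
  have hθ0 : 0 < 2*x := by linarith
  have hθ1 : 2*x ≤ 1 := by linarith
  obtain ⟨P1, P2, P3, P4, P5, Q1, Q2, Q3, Q4, Q5, Q6, Q7, Q8⟩ := two_arcs hr hθ0 hθ1
  have hhh : 2*r - 2*r*Real.cos (2*x) = h := by
    rw [hcos2, hrdef, hh4]
    field_simp
    linear_combination (-4) * hsc
  have hbpos : 0 < 2*r*Real.sin (2*x) :=
    mul_pos (by linarith) (Real.sin_pos_of_pos_of_lt_pi hθ0 (by linarith [Real.pi_gt_three]))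
  exact ⟨2*r*(2*x), 2*r*Real.sin (2*x), tg r (2*x), tg' r (2*x), tg'' r (2*x),
    by positivity, hbpos, P1, P2, P3, P4, P5, Q1, Q2, hhh ▸ Q3, Q4, Q5, Q6,
    hhh ▸ Q7, ineq1, by rw [Q8]; exact ineq2⟩
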